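/- Let p be prime, ξ ∈ ℂ a primitive p-th root of unity, and ∅ ≠ S ⊆ ℤ_p \ {0}. For k ∈ ℤ_p set λ_k = Σ_{s∈S} ξ^{sk}. Then for nonzero k, k' ∈ ℤ_p: λ_k = λ_{k'} if and only if there exists ℓ ∈ ℤ_p \ {0} with k = ℓ·k' and {s·ℓ : s ∈ S} = S. -/

import Mathlib

open Finset Polynomial

/-- Key lemma: sums of `ξ ^ a.val` over subsets of nonzero elements of `ZMod p`
determine the subsets. -/
lemma sum_pow_inj (p : ℕ) [Fact p.Prime] (ξ : ℂ) (hξ : IsPrimitiveRoot ξ p)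
    (A B : Finset (ZMod p)) (hA : (0 : ZMod p) ∉ A) (hB : (0 : ZMod p) ∉ B)
    (h : (∑ a ∈ A, ξ ^ a.val) = ∑ b ∈ B, ξ ^ b.val) : A = B := by
  have hp : 1 < p := (Fact.out : p.Prime).one_lt
  have hp0 : 0 < p := hp.trans_le' (by omega)
  haveI : NeZero p := ⟨hp0.ne'⟩
  set f : ZMod p → ℚ := fun t => (if t ∈ A then 1 else 0) - (if t ∈ B then 1 else 0) with hf
  set q : ℚ[X] := ∑ t : ZMod p, C (f t) * X ^ t.val with hq
  -- coefficients of q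
  have hcoeff : ∀ t : ZMod p, q.coeff t.val = f t := by
    intro t
    rw [hq, finset_sum_coeff]
    rw [Finset.sum_eq_single t]
    · simp
    · intro u _ hu
      have : ¬ t.val = u.val := fun hv => hu ((ZMod.val_injective p) hv.symm)
      simp [coeff_X_pow, this]
    · simp
  -- q vanishes at ξ
  have haev : aeval ξ q = 0 := by
    have e : ∀ t : ZMod p, aeval ξ (C (f t) * X ^ t.val) =
        (if t ∈ A then ξ ^ t.val else 0) - (if t ∈ B then ξ ^ t.val else 0) := by
      intro t
      have : (f t : ℂ) = (if t ∈ A then 1 else 0) - (if t ∈ B then 1 else 0) := by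
        simp only [hf]; push_cast; split_ifs <;> norm_num
      simp only [map_mul, aeval_C, map_pow, aeval_X, Algebra.algebraMap_self]
      rw [show ((algebraMap ℚ ℂ) (f t)) = (f t : ℂ) from rfl, this]
      split_ifs <;> ring
    rw [hq, map_sum, Finset.sum_congr rfl fun t _ => e t, Finset.sum_sub_distrib,
      Finset.sum_ite_mem, Finset.sum_ite_mem, Finset.univ_inter, Finset.univ_inter, h,
      sub_self]
  -- minpoly divides q
  have hmin : minpoly ℚ ξ ∣ q := minpoly.dvd ℚ ξ haev
  rw [← cyclotomic_eq_minpoly_rat hξ hp0] at hmin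
  obtain ⟨r, hr⟩ := hmin
  -- degree considerations: deg q ≤ p - 1 = deg cyclotomic, so r is a constant
  have hdegq : q.degree ≤ (p - 1 : ℕ) := by
    rw [hq]
    refine (Polynomial.degree_sum_le _ _).trans ?_
    apply Finset.sup_le
    intro t _
    refine (degree_C_mul_X_pow_le _ _).trans ?_
    have : t.val ≤ p - 1 := by have := t.val_lt; omega
    exact_mod_cast Nat.cast_le.mpr this
  have hdegc : (cyclotomic p ℚ).natDegree = p - 1 := by
    rw [natDegree_cyclotomic, Nat.totient_prime (Fact.out : p.Prime)]
  have hrC : r = C (r.coeff 0) := by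
    by_contra hrc
    have hr0 : r ≠ 0 := by rintro rfl; exact hrc (by simp)
    have h1 : 1 ≤ r.natDegree := by
      rcases Nat.eq_zero_or_pos r.natDegree with h | h
      · exact absurd (Polynomial.eq_C_of_natDegree_eq_zero h) hrc
      · exact h
    have hq0 : q ≠ 0 := by
      rw [hr]
      exact mul_ne_zero (cyclotomic_ne_zero p ℚ) hr0
    have : q.natDegree = (p - 1) + r.natDegree := by
      rw [hr, natDegree_mul (cyclotomic_ne_zero p ℚ) hr0, hdegc]
    have hle : q.natDegree ≤ p - 1 := natDegree_le_iff_degree_le.mpr hdegq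
    omega
  -- constant coefficient of q is 0
  have hq0coeff : q.coeff 0 = 0 := by
    have := hcoeff 0
    simpa [hf, hA, hB, ZMod.val_zero] using this
  have hc : r.coeff 0 = 0 := by
    have : q.coeff 0 = (cyclotomic p ℚ).coeff 0 * r.coeff 0 := by
      rw [hr, mul_coeff_zero]
    rw [hq0coeff, cyclotomic_coeff_zero ℚ hp] at this
    linarith
  have hqzero : q = 0 := by
    rw [hr, hrC, hc]; simp
  ext t
  have := hcoeff t
  rw [hqzero] at this
  simp only [coeff_zero, hf] at this
  by_cases ht : t ∈ A <;> by_cases ht' : t ∈ B <;>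
      simp only [ht, ht', if_true, if_false, sub_zero, zero_sub, iff_true, iff_false] at this ⊢ <;>
    first
      | trivial
      | norm_num at this

/-- for nonzero k, k', the eigenvalues λ_k and λ_{k'} coincide iff
k = ℓ·k' for some nonzero ℓ with S·ℓ = S. -/
theorem stmt_10 (p : ℕ) [Fact p.Prime] (ξ : ℂ) (hξ : IsPrimitiveRoot ξ p)
    (S : Finset (ZMod p)) (hS : S.Nonempty) (h0 : (0 : ZMod p) ∉ S)
    (k k' : ZMod p) (hk : k ≠ 0) (hk' : k' ≠ 0) :
    (∑ s ∈ S, ξ ^ (s * k).val) = (∑ s ∈ S, ξ ^ (s * k').val) ↔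
      ∃ l : ZMod p, l ≠ 0 ∧ k = l * k' ∧ S.image (fun s => s * l) = S := by
  have hinj : ∀ c : ZMod p, c ≠ 0 → Set.InjOn (fun s : ZMod p => s * c) S := by
    intro c hc s _ t _ hst
    exact mul_right_cancel₀ hc hst
  have hsum : ∀ c : ZMod p, c ≠ 0 →
      (∑ s ∈ S, ξ ^ (s * c).val) = ∑ t ∈ S.image (fun s => s * c), ξ ^ t.val := by
    intro c hc
    rw [Finset.sum_image (fun s hs t ht h => hinj c hc hs ht h)]
  have hmem0 : ∀ c : ZMod p, c ≠ 0 → (0 : ZMod p) ∉ S.image (fun s => s * c) := by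
    intro c hc h
    obtain ⟨s, hs, hsc⟩ := Finset.mem_image.mp h
    exact h0 (by rwa [← (mul_eq_zero.mp hsc).resolve_right hc])
  constructor
  · intro h
    have heq : S.image (fun s => s * k) = S.image (fun s => s * k') := by
      apply sum_pow_inj p ξ hξ _ _ (hmem0 k hk) (hmem0 k' hk')
      rw [← hsum k hk, ← hsum k' hk', h]
    refine ⟨k * k'⁻¹, ?_, ?_, ?_⟩
    · exact mul_ne_zero hk (inv_ne_zero hk')
    · field_simp
    · ext t
      constructor
      · intro ht
        obtain ⟨s, hs, rfl⟩ := Finset.mem_image.mp ht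
        have : s * k ∈ S.image (fun s => s * k') := heq ▸ Finset.mem_image_of_mem _ hs
        obtain ⟨u, hu, huk⟩ := Finset.mem_image.mp this
        have : s * (k * k'⁻¹) = u := by
          field_simp
          exact huk.symm.trans (mul_comm u k')
        rwa [this]
      · intro ht
        have : t * k' ∈ S.image (fun s => s * k) := heq.symm ▸ Finset.mem_image_of_mem _ ht
        obtain ⟨u, hu, huk⟩ := Finset.mem_image.mp this
        refine Finset.mem_image.mpr ⟨u, hu, ?_⟩
        field_simp
        exact huk.trans (mul_comm t k')
  · rintro ⟨l, hl, rfl, hSl⟩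
    rw [hsum (l * k') (mul_ne_zero hl hk'), hsum k' hk']
    congr 1
    calc S.image (fun s => s * (l * k'))
        = (S.image (fun s => s * l)).image (fun s => s * k') := by
          rw [Finset.image_image]
          exact Finset.image_congr fun s _ => by simp [Function.comp, mul_assoc]
      _ = S.image (fun s => s * k') := by rw [hSl]
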